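/- For every integer n ≥ 3, there exists an n×n 0-1 matrix A with zero trace such that A² is a 0-1 matrix and A has at least (n² + 4n − 5)/4 entries equal to 1 when n is odd, and at least (n² + 4n − 4)/4 entries equal to 1 when n is even. -/

import Mathlib

/-- The edge predicate of the extremal digraph: with `a = n/2`, vertices `0..a-1` form side `X`,
vertices `a..n-1` form side `Y` (with `a` the hub `y₀`). -/
def constrP (a n p q : ℕ) : Prop :=
  (p < a ∧ a ≤ q) ∨ (p = a ∧ a < q) ∨ (a < p ∧ q + a + 1 = p) ∨
    (n = a + a ∧ p = a ∧ q + 1 = a)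

instance constrP.dec : ∀ a n p q, Decidable (constrP a n p q) := fun _ _ _ _ => by
  unfold constrP; infer_instance

lemma constrP_uniq (n a : ℕ) (ha : a = n / 2) {i j k k' : ℕ}
    (hi : i < n) (hj : j < n) (hk : k < n) (hk' : k' < n)
    (h1 : constrP a n i k) (h2 : constrP a n k j)
    (h3 : constrP a n i k') (h4 : constrP a n k' j) : k = k' := by
  unfold constrP at h1 h2 h3 h4; omega

lemma sum_indicator_range (n : ℕ) (p : ℕ → Prop) [DecidablePred p] (c d : ℕ)
    (hcd : c ≤ d) (hdn : d ≤ n) (hp : ∀ j < n, p j ↔ (c ≤ j ∧ j < d)) :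
    ∑ j ∈ Finset.range n, (if p j then (1:ℤ) else 0) = (d : ℤ) - c := by
  have h1 : ∑ j ∈ Finset.range n, (if p j then (1:ℤ) else 0)
      = ∑ j ∈ Finset.range n, (if j ∈ Finset.Ico c d then (1:ℤ) else 0) := by
    refine Finset.sum_congr rfl fun j hj => ?_
    rw [Finset.mem_range] at hj
    simp only [Finset.mem_Ico]
    exact if_congr (hp j hj) rfl rfl
  rw [h1, Finset.sum_ite_mem]
  have h2 : Finset.range n ∩ Finset.Ico c d = Finset.Ico c d := by
    ext x; simp only [Finset.mem_inter, Finset.mem_range, Finset.mem_Ico]; omega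
  rw [h2, Finset.sum_const, Nat.card_Ico, nsmul_eq_mul, mul_one]
  push_cast [hcd]
  ring

theorem stmt_4 :
    ∀ n : ℕ, 3 ≤ n → ∃ A : Matrix (Fin n) (Fin n) ℤ,
      (∀ i j, A i j = 0 ∨ A i j = 1) ∧
      (∀ i, A i i = 0) ∧
      (∀ i j, (A * A) i j = 0 ∨ (A * A) i j = 1) ∧
      (Odd n → (n : ℤ)^2 + 4 * n - 5 ≤ 4 * ∑ i, ∑ j, A i j) ∧
      (Even n → (n : ℤ)^2 + 4 * n - 4 ≤ 4 * ∑ i, ∑ j, A i j) := by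
  intro n hn
  set a := n / 2 with ha
  have han : 1 ≤ a ∧ a < n ∧ n ≤ 2 * a + 1 ∧ 2 * a ≤ n := by omega
  have hTOT : ∑ i : Fin n, ∑ j : Fin n,
      (if constrP a n i.val j.val then (1:ℤ) else 0)
      = (a : ℤ) * ((n : ℤ) - a) + ((n : ℤ) - a - 1) + ((n : ℤ) - a - 1)
        + (if n = a + a then (1:ℤ) else 0) := by
    have h0 : ∑ i : Fin n, ∑ j : Fin n,
        (if constrP a n i.val j.val then (1:ℤ) else 0)
        = ∑ i ∈ Finset.range n, ∑ j ∈ Finset.range n,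
            (if constrP a n i j then (1:ℤ) else 0) := by
      rw [Fin.sum_univ_eq_sum_range (fun i => ∑ j : Fin n,
        (if constrP a n i j.val then (1:ℤ) else 0)) n]
      exact Finset.sum_congr rfl fun i _ =>
        Fin.sum_univ_eq_sum_range (fun j => if constrP a n i j then (1:ℤ) else 0) n
    rw [h0]
    have hsplit : ∀ p q : ℕ, (if constrP a n p q then (1:ℤ) else 0)
        = (if p < a ∧ a ≤ q then (1:ℤ) else 0) + (if p = a ∧ a < q then (1:ℤ) else 0)
          + (if a < p ∧ q + a + 1 = p then (1:ℤ) else 0)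
          + (if n = a + a ∧ p = a ∧ q + 1 = a then (1:ℤ) else 0) := by
      intro p q
      unfold constrP
      split_ifs <;> omega
    have h1 : ∑ i ∈ Finset.range n, ∑ j ∈ Finset.range n,
        (if constrP a n i j then (1:ℤ) else 0)
        = (∑ i ∈ Finset.range n, ∑ j ∈ Finset.range n,
            (if i < a ∧ a ≤ j then (1:ℤ) else 0))
          + (∑ i ∈ Finset.range n, ∑ j ∈ Finset.range n,
            (if i = a ∧ a < j then (1:ℤ) else 0))
          + (∑ i ∈ Finset.range n, ∑ j ∈ Finset.range n,
            (if a < i ∧ j + a + 1 = i then (1:ℤ) else 0))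
          + (∑ i ∈ Finset.range n, ∑ j ∈ Finset.range n,
            (if n = a + a ∧ i = a ∧ j + 1 = a then (1:ℤ) else 0)) := by
      rw [← Finset.sum_add_distrib, ← Finset.sum_add_distrib, ← Finset.sum_add_distrib]
      refine Finset.sum_congr rfl fun i _ => ?_
      rw [← Finset.sum_add_distrib, ← Finset.sum_add_distrib, ← Finset.sum_add_distrib]
      exact Finset.sum_congr rfl fun j _ => hsplit i j
    rw [h1]
    have T1 : ∑ i ∈ Finset.range n, ∑ j ∈ Finset.range n,
        (if i < a ∧ a ≤ j then (1:ℤ) else 0)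
        = (a : ℤ) * ((n : ℤ) - a) := by
      have hrow : ∀ i ∈ Finset.range n, ∑ j ∈ Finset.range n,
          (if i < a ∧ a ≤ j then (1:ℤ) else 0)
          = (if i < a then (1:ℤ) else 0) * ((n : ℤ) - a) := by
        intro i _
        by_cases hia : i < a
        · rw [if_pos hia, one_mul]
          rw [sum_indicator_range n _ a n (by omega) le_rfl
            (fun j hj => by simp only [hia, true_and]; omega)]
        · rw [if_neg hia, zero_mul]
          exact Finset.sum_eq_zero fun j _ => by rw [if_neg]; tauto
      rw [Finset.sum_congr rfl hrow, ← Finset.sum_mul,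
        sum_indicator_range n _ 0 a (by omega) (by omega) (fun j hj => by omega)]
      push_cast
      ring
    have T2 : ∑ i ∈ Finset.range n, ∑ j ∈ Finset.range n,
        (if i = a ∧ a < j then (1:ℤ) else 0)
        = (n : ℤ) - a - 1 := by
      have hrow : ∀ i ∈ Finset.range n, ∑ j ∈ Finset.range n,
          (if i = a ∧ a < j then (1:ℤ) else 0)
          = (if i = a then (1:ℤ) else 0) * ((n : ℤ) - a - 1) := by
        intro i _
        by_cases hia : i = a
        · rw [if_pos hia, one_mul]
          rw [sum_indicator_range n _ (a + 1) n (by omega) le_rfl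
            (fun j hj => by simp only [hia, true_and]; omega)]
          push_cast
          ring
        · rw [if_neg hia, zero_mul]
          exact Finset.sum_eq_zero fun j _ => by rw [if_neg]; tauto
      rw [Finset.sum_congr rfl hrow, ← Finset.sum_mul,
        sum_indicator_range n _ a (a + 1) (by omega) (by omega) (fun j hj => by omega)]
      push_cast
      ring
    have T3 : ∑ i ∈ Finset.range n, ∑ j ∈ Finset.range n,
        (if a < i ∧ j + a + 1 = i then (1:ℤ) else 0)
        = (n : ℤ) - a - 1 := by
      have hrow : ∀ i ∈ Finset.range n, ∑ j ∈ Finset.range n,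
          (if a < i ∧ j + a + 1 = i then (1:ℤ) else 0)
          = (if a < i then (1:ℤ) else 0) := by
        intro i hi
        rw [Finset.mem_range] at hi
        by_cases hia : a < i
        · rw [if_pos hia]
          rw [sum_indicator_range n _ (i - a - 1) (i - a) (by omega) (by omega)
            (fun j hj => by omega)]
          omega
        · rw [if_neg hia]
          exact Finset.sum_eq_zero fun j _ => by rw [if_neg]; tauto
      rw [Finset.sum_congr rfl hrow,
        sum_indicator_range n _ (a + 1) n (by omega) le_rfl (fun j hj => by omega)]
      push_cast
      ring
    have T4 : ∑ i ∈ Finset.range n, ∑ j ∈ Finset.range n,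
        (if n = a + a ∧ i = a ∧ j + 1 = a then (1:ℤ) else 0)
        = (if n = a + a then (1:ℤ) else 0) := by
      by_cases hpar : n = a + a
      · rw [if_pos hpar]
        have hrow : ∀ i ∈ Finset.range n, ∑ j ∈ Finset.range n,
            (if n = a + a ∧ i = a ∧ j + 1 = a then (1:ℤ) else 0)
            = (if i = a then (1:ℤ) else 0) := by
          intro i _
          by_cases hia : i = a
          · rw [if_pos hia]
            rw [sum_indicator_range n _ (a - 1) a (by omega) (by omega)
              (fun j hj => by simp only [hpar, hia, true_and]; omega)]
            omega
          · rw [if_neg hia]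
            exact Finset.sum_eq_zero fun j _ => by rw [if_neg]; tauto
        rw [Finset.sum_congr rfl hrow,
          sum_indicator_range n _ a (a + 1) (by omega) (by omega) (fun j hj => by omega)]
        push_cast
        ring
      · rw [if_neg hpar]
        refine Finset.sum_eq_zero fun i _ => Finset.sum_eq_zero fun j _ => by
          rw [if_neg]; tauto
    rw [T1, T2, T3, T4]
  refine ⟨fun i j => if constrP a n i.val j.val then 1 else 0, ?_, ?_, ?_, ?_, ?_⟩
  · intro i j
    dsimp only
    split <;> simp
  · intro i
    dsimp only
    rw [if_neg]
    unfold constrP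
    omega
  · intro i j
    erw [Matrix.mul_apply]
    have hre : ∀ k : Fin n,
        (fun i j : Fin n => if constrP a n i.val j.val then (1:ℤ) else 0) i k *
          (fun i j : Fin n => if constrP a n i.val j.val then (1:ℤ) else 0) k j
        = if constrP a n i.val k.val ∧ constrP a n k.val j.val then (1:ℤ) else 0 := by
      intro k
      dsimp only
      by_cases h1 : constrP a n i.val k.val <;> by_cases h2 : constrP a n k.val j.val <;>
        simp [h1, h2]
    simp only [hre]
    by_cases hex : ∃ k : Fin n, constrP a n i.val k.val ∧ constrP a n k.val j.val
    · obtain ⟨k0, hk0⟩ := hex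
      right
      rw [Finset.sum_eq_single k0]
      · rw [if_pos hk0]
      · intro b _ hb
        rw [if_neg]
        rintro ⟨hb1, hb2⟩
        exact hb (Fin.ext (constrP_uniq n a ha i.isLt j.isLt b.isLt k0.isLt hb1 hb2 hk0.1 hk0.2))
      · intro h; exact absurd (Finset.mem_univ k0) h
    · left
      push_neg at hex
      refine Finset.sum_eq_zero fun k _ => ?_
      rw [if_neg]
      intro h
      exact (hex k h.1) h.2
  · intro hodd
    have hb : n = 2 * a + 1 := by rw [Nat.odd_iff] at hodd; omega
    rw [hTOT, if_neg (by omega)]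
    have hcast : (n : ℤ) = 2 * (a : ℤ) + 1 := by exact_mod_cast hb
    rw [hcast]
    nlinarith [sq_nonneg ((a : ℤ))]
  · intro heven
    have hb : n = a + a := by rw [Nat.even_iff] at heven; omega
    rw [hTOT, if_pos hb]
    have hcast : (n : ℤ) = (a : ℤ) + a := by exact_mod_cast hb
    rw [hcast]
    nlinarith [sq_nonneg ((a : ℤ))]
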